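/- For integers r ≥ 4 and 1 ≤ k ≤ r−3, the identity C(r, k+1)·((2r−k)(k+1) − (2r−2−k)(k+2))/(k+2) + C(k+(r−3)+1, k+1)·((2r−k)(k+1) − (2r−2−k)k)/(k+2) = C(r−2, k−1) holds; in particular, the coefficient c̃_g(r, k, 2r−3−k) equals C(r−2, k−1) and is strictly positive. -/

import Mathlib

theorem ctilde_at_top (r k : ℕ) (hr : 4 ≤ r) (hk1 : 1 ≤ k) (hk : k ≤ r - 3) :
    (r.choose (k + 1) : ℚ) *
        ((2 * (r : ℚ) - k) * ((k : ℚ) + 1) - (2 * (r : ℚ) - 2 - k) * ((k : ℚ) + 2)) / ((k : ℚ) + 2) +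
      ((k + ((2 * r - 3 - k) - r) + 1).choose (k + 1) : ℚ) *
        ((2 * (r : ℚ) - k) * ((k : ℚ) + 1) - (2 * (r : ℚ) - 2 - k) * k) / ((k : ℚ) + 2) =
      ((r - 2).choose (k - 1) : ℚ) ∧
    0 < (((r - 2).choose (k - 1) : ℚ)) := by
  obtain ⟨j, rfl⟩ : ∃ j, k = j + 1 := ⟨k - 1, by omega⟩
  obtain ⟨t, rfl⟩ : ∃ t, r = j + 4 + t := ⟨r - (j + 4), by omega⟩
  have e1 : (j + 1) + ((2 * (j + 4 + t) - 3 - (j + 1)) - (j + 4 + t)) + 1 = j + t + 2 := by omega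
  have e2 : (j + 4 + t) - 2 = j + t + 2 := by omega
  have e3 : (j + 1) - 1 = j := by omega
  rw [e1, e2, e3]
  constructor
  · have hne : (((j + 1 : ℕ)) : ℚ) + 2 ≠ 0 := by positivity
    rw [← add_div, div_eq_iff hne]
    -- key choose identities
    have h1 : ((j + t + 2).choose (j + 2) : ℚ) * (j + 2) =
        ((j + t + 2).choose (j + 1) : ℚ) * (t + 1) := by
      have := Nat.choose_succ_right_eq (j + t + 2) (j + 1)
      have h' : (j + t + 2) - (j + 1) = t + 1 := by omega
      rw [h'] at this
      exact_mod_cast congrArg (Nat.cast : ℕ → ℚ) this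
    have h2 : ((j + t + 2).choose (j + 1) : ℚ) * (j + 1) =
        ((j + t + 2).choose j : ℚ) * (t + 2) := by
      have := Nat.choose_succ_right_eq (j + t + 2) j
      have h' : (j + t + 2) - j = t + 2 := by omega
      rw [h'] at this
      exact_mod_cast congrArg (Nat.cast : ℕ → ℚ) this
    have h3 : ((j + 4 + t).choose (j + 2) : ℚ) =
        ((j + t + 2).choose j : ℚ) + 2 * ((j + t + 2).choose (j + 1) : ℚ)
          + ((j + t + 2).choose (j + 2) : ℚ) := by
      have e : j + 4 + t = (j + t + 2) + 1 + 1 := by omega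
      rw [e, Nat.choose_succ_succ ((j + t + 2) + 1) (j + 1),
        Nat.choose_succ_succ (j + t + 2) j, Nat.choose_succ_succ (j + t + 2) (j + 1)]
      push_cast
      ring
    push_cast
    linear_combination ((j : ℚ) - 1 - 2 * t) * h3 + 4 * h1 + 2 * h2
  · exact_mod_cast Nat.choose_pos (by omega : j ≤ j + t + 2)
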